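/- Let Z be the minimum of n independent uniform [0,1] random variables, and let L be a nonnegative random variable such that for every z in (0,1], E[L | Z = z] <= min{T, 1/z}. Then E[L] <= 1 + n * ln(T). -/

import Mathlib

open MeasureTheory ProbabilityTheory

lemma integral_pZ (n : ℕ) (hn : 0 < n) :
    ∫ z in Set.Ioc (0:ℝ) 1, (n:ℝ) * (1 - z) ^ (n - 1) = 1 := by
  rw [← intervalIntegral.integral_of_le (by norm_num : (0:ℝ) ≤ 1),
    intervalIntegral.integral_const_mul]
  have h2 : ∫ x in (0:ℝ)..1, (1 - x) ^ (n-1) = ∫ x in (0:ℝ)..1, x ^ (n-1) := by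
    have := intervalIntegral.integral_comp_sub_left (a := (0:ℝ)) (b := 1)
      (fun x => x ^ (n-1)) 1
    simpa using this
  rw [h2, integral_pow]
  have : (n - 1 + 1 : ℕ) = n := Nat.sub_add_cancel hn
  rw [this]
  have hn' : (n:ℝ) ≠ 0 := Nat.cast_ne_zero.mpr hn.ne'
  field_simp
  rw [one_pow, zero_pow hn.ne', Nat.cast_sub (show 1 ≤ n from hn)]
  ring

lemma integral_min (T : ℕ) (hT : 1 ≤ T) :
    ∫ z in Set.Ioc (0:ℝ) 1, (min (T:ℝ) (1/z) - 1) = Real.log T := by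
  have hT0 : (0:ℝ) < T := by exact_mod_cast hT
  have hiT : (0:ℝ) < 1/T := by positivity
  have hiT1 : (1:ℝ)/T ≤ 1 := by
    rw [div_le_one hT0]; exact_mod_cast hT
  have hsplit : Set.Ioc (0:ℝ) (1/T) ∪ Set.Ioc (1/T:ℝ) 1 = Set.Ioc (0:ℝ) 1 :=
    Set.Ioc_union_Ioc_eq_Ioc hiT.le hiT1
  -- congr on pieces
  have hc1 : Set.EqOn (fun z : ℝ => min (T:ℝ) (1/z) - 1) (fun _ => (T:ℝ) - 1)
      (Set.Ioc (0:ℝ) (1/T)) := by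
    intro z hz
    have hz0 : 0 < z := hz.1
    have : (T:ℝ) ≤ 1/z := by
      rw [le_div_iff₀ hz0]
      calc (T:ℝ) * z ≤ (T:ℝ) * (1/T) := by
            apply mul_le_mul_of_nonneg_left hz.2 hT0.le
        _ = 1 := by field_simp
    show min (T:ℝ) (1/z) - 1 = _
    rw [min_eq_left this]
  have hc2 : Set.EqOn (fun z : ℝ => min (T:ℝ) (1/z) - 1) (fun z => 1/z - 1)
      (Set.Ioc ((1:ℝ)/T) 1) := by
    intro z hz
    have hz0 : 0 < z := lt_of_le_of_lt hiT.le hz.1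
    have : 1/z ≤ (T:ℝ) := by
      rw [div_le_iff₀ hz0]
      calc (1:ℝ) = T * (1/T) := by field_simp
        _ ≤ T * z := by apply mul_le_mul_of_nonneg_left hz.1.le hT0.le
    show min (T:ℝ) (1/z) - 1 = _
    rw [min_eq_right this]
  have hi1 : IntegrableOn (fun z : ℝ => min (T:ℝ) (1/z) - 1) (Set.Ioc (0:ℝ) (1/T)) := by
    apply (integrableOn_const measure_Ioc_lt_top.ne).congr_fun hc1.symm
      measurableSet_Ioc
  have hi2 : IntegrableOn (fun z : ℝ => min (T:ℝ) (1/z) - 1) (Set.Ioc ((1:ℝ)/T) 1) := by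
    apply IntegrableOn.congr_fun _ hc2.symm measurableSet_Ioc
    apply Integrable.sub
    · apply ContinuousOn.integrableOn_Icc _ |>.mono_set Set.Ioc_subset_Icc_self
      apply ContinuousOn.div continuousOn_const continuousOn_id
      intro x hx
      exact ne_of_gt (lt_of_lt_of_le hiT hx.1)
    · exact integrableOn_const measure_Ioc_lt_top.ne
  rw [← hsplit, setIntegral_union (Set.Ioc_disjoint_Ioc_of_le le_rfl) measurableSet_Ioc hi1 hi2,
    setIntegral_congr_fun measurableSet_Ioc hc1, setIntegral_congr_fun measurableSet_Ioc hc2]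
  rw [setIntegral_const]
  rw [← intervalIntegral.integral_of_le hiT1]
  rw [intervalIntegral.integral_sub, integral_one_div, intervalIntegral.integral_const]
  · rw [measureReal_def, Real.volume_Ioc]
    rw [ENNReal.toReal_ofReal (by rw [sub_zero]; positivity), smul_eq_mul, smul_eq_mul]
    rw [Real.log_div one_ne_zero (by positivity : (1:ℝ)/(T:ℝ) ≠ 0), Real.log_one,
      one_div, Real.log_inv]
    have hT0' : (T:ℝ) ≠ 0 := hT0.ne'
    field_simp
    ring
  · rw [Set.uIcc_of_le hiT1]
    rintro ⟨h1, _⟩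
    linarith
  · apply ContinuousOn.intervalIntegrable
    apply ContinuousOn.div continuousOn_const continuousOn_id
    intro x hx
    rw [Set.uIcc_of_le hiT1] at hx
    exact ne_of_gt (lt_of_lt_of_le hiT hx.1)
  · exact intervalIntegrable_const

lemma integrableOn_min' (T : ℕ) (hT : 1 ≤ T) :
    IntegrableOn (fun z : ℝ => min (T:ℝ) (1/z) - 1) (Set.Ioc (0:ℝ) 1) := by
  have hc : IntegrableOn (fun _ : ℝ => (T:ℝ)) (Set.Ioc (0:ℝ) 1) :=
    integrableOn_const measure_Ioc_lt_top.ne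
  refine hc.mono' ?_ ?_
  · exact ((measurable_const.min (measurable_const.div measurable_id)).sub
      measurable_const).aestronglyMeasurable
  · filter_upwards [ae_restrict_mem measurableSet_Ioc] with z hz
    have h1 : (1:ℝ) ≤ 1/z := by rw [le_div_iff₀ hz.1]; linarith [hz.2]
    have h2 : (1:ℝ) ≤ (T:ℝ) := by exact_mod_cast hT
    have hm1 : 1 ≤ min (T:ℝ) (1/z) := le_min h2 h1
    have hm2 : min (T:ℝ) (1/z) ≤ T := min_le_left _ _
    rw [Real.norm_eq_abs, abs_le]
    constructor <;> nlinarith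

/-- Let `Z` be the minimum of `n` independent uniform `[0,1]` random variables
(whose PDF is `p_Z(z) = n (1-z)^(n-1)`), and let `L` be a nonnegative random variable such that
`E[L | Z = z] ≤ min {T, 1/z}` for every `z ∈ (0,1]`.  Then `E[L] ≤ 1 + n * ln T`.
Here `g z` denotes the conditional expectation `E[L | Z = z]`, so that
`E[L] = ∫ g z * p_Z z dz`. -/
theorem expected_L_le_one_add_n_log {Ω : Type*} [MeasureSpace Ω]
    [IsProbabilityMeasure (ℙ : Measure Ω)]
    (T n : ℕ) (hT : 1 ≤ T) (hn : 0 < n)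
    (L : Ω → ℝ) (hL0 : ∀ ω, 0 ≤ L ω)
    (g : ℝ → ℝ) (hg0 : ∀ z, 0 ≤ g z)
    (hEL : ∫ ω : Ω, L ω ∂ℙ = ∫ z in Set.Ioc (0:ℝ) 1, g z * (n * (1 - z) ^ (n - 1)))
    (hg : ∀ z ∈ Set.Ioc (0:ℝ) 1, g z ≤ min (T : ℝ) (1 / z)) :
    ∫ ω : Ω, L ω ∂ℙ ≤ 1 + n * Real.log T := by
  rw [hEL]
  have hT1 : (1:ℝ) ≤ T := by exact_mod_cast hT
  have hlog : 0 ≤ Real.log T := Real.log_nonneg hT1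
  by_cases hf : IntegrableOn (fun z : ℝ => g z * (n * (1 - z) ^ (n - 1)))
      (Set.Ioc (0:ℝ) 1)
  · have hip : IntegrableOn (fun z : ℝ => (n:ℝ) * (1 - z) ^ (n - 1))
        (Set.Ioc (0:ℝ) 1) := by
      apply ContinuousOn.integrableOn_Icc _ |>.mono_set Set.Ioc_subset_Icc_self
      fun_prop
    have him : IntegrableOn (fun z : ℝ => (n:ℝ) * (min (T:ℝ) (1/z) - 1))
        (Set.Ioc (0:ℝ) 1) := (integrableOn_min' T hT).const_mul _
    have hh : IntegrableOn
        (fun z : ℝ => (n:ℝ) * (1 - z) ^ (n - 1) + (n:ℝ) * (min (T:ℝ) (1/z) - 1))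
        (Set.Ioc (0:ℝ) 1) := hip.add him
    have hle : ∀ z ∈ Set.Ioc (0:ℝ) 1,
        g z * (n * (1 - z) ^ (n - 1))
          ≤ (n:ℝ) * (1 - z) ^ (n - 1) + (n:ℝ) * (min (T:ℝ) (1/z) - 1) := by
      intro z hz
      have hmin := hg z hz
      have h1 : (0:ℝ) ≤ 1 - z := by linarith [hz.2]
      have h2 : (1 - z) ^ (n-1) ≤ 1 := pow_le_one₀ h1 (by linarith [hz.1])
      have h3 : (0:ℝ) ≤ (1 - z) ^ (n-1) := pow_nonneg h1 _
      have h4 : 1 ≤ min (T:ℝ) (1/z) :=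
        le_min hT1 (by rw [le_div_iff₀ hz.1]; linarith [hz.2])
      have hn0 : (0:ℝ) ≤ n := Nat.cast_nonneg n
      nlinarith [mul_le_mul_of_nonneg_right hmin
        (by positivity : (0:ℝ) ≤ (n:ℝ) * (1 - z) ^ (n-1)),
        mul_nonneg (mul_nonneg hn0
          (by linarith : (0:ℝ) ≤ min (T:ℝ) (1/z) - 1))
          (by linarith : (0:ℝ) ≤ 1 - (1 - z) ^ (n-1))]
    calc ∫ z in Set.Ioc (0:ℝ) 1, g z * (n * (1 - z) ^ (n - 1))
        ≤ ∫ z in Set.Ioc (0:ℝ) 1,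
            ((n:ℝ) * (1 - z) ^ (n - 1) + (n:ℝ) * (min (T:ℝ) (1/z) - 1)) :=
          setIntegral_mono_on hf hh measurableSet_Ioc hle
      _ = 1 + n * Real.log T := by
          rw [integral_add hip him, integral_pZ n hn, integral_const_mul,
            integral_min T hT]
  · rw [integral_undef hf]
    positivity
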